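/- Let G be a totally disconnected locally compact group and z an element of G with C(z) ≠ {e}. Let g ∈ C(z) with g ≠ e, and let ν = p·δ_g + (1−p)·δ_e where p ∈ (0,1) and p ≠ 1/2. Then the measure μ = ν * δ_z is not a Choquet-Deny measure; that is, there exists a bounded continuous μ-harmonic function on G that is not constant on the left cosets of G_μ. -/

import Mathlib

open Filter Topology MeasureTheory Pointwise ENNReal

section MeasDefs
variable {G : Type*} [Group G] [TopologicalSpace G] [MeasurableSpace G]

/-- The support of a measure: the set of points all of whose neighbourhoods
have positive measure. -/
def measSupport (μ : Measure G) : Set G := {x : G | ∀ U ∈ nhds x, 0 < μ U}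

/-- `G_μ`: the smallest closed subgroup of `G` containing the support of `μ`. -/
def adaptedSubgroup [IsTopologicalGroup G] (μ : Measure G) : Subgroup G :=
  (Subgroup.closure (measSupport μ)).topologicalClosure

/-- `μ` is a Choquet–Deny measure: every bounded continuous `μ`-harmonic function
`h` (i.e. `h(g) = ∫ h(g g') μ(dg')` for all `g`) is constant on the left cosets
of `G_μ`. -/
def IsChoquetDenyMeasure [IsTopologicalGroup G] (μ : Measure G) : Prop :=
  ∀ h : G → ℂ, Continuous h → (∃ C : ℝ, ∀ g : G, ‖h g‖ ≤ C) →
    (∀ g : G, h g = ∫ x, h (g * x) ∂μ) →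
    ∀ g : G, ∀ y ∈ adaptedSubgroup μ, h (g * y) = h g

/-- Weak convergence of a net of measures along a filter, in the
`σ(M₁(G), C_b(G))`-topology: integrals of bounded continuous functions converge. -/
def WeaklyTendsto {ι : Type*} (l : Filter ι) (μs : ι → Measure G) (ν : Measure G) : Prop :=
  ∀ f : BoundedContinuousFunction G ℝ,
    Tendsto (fun a => ∫ x, f x ∂(μs a)) l (nhds (∫ x, f x ∂ν))

end MeasDefs

/-- The contraction subgroup of an element `z` of a topological group:
all `x` with `zⁿ x z⁻ⁿ → 1` as `n → ∞`. -/
def ContractionElt {G : Type*} [Group G] [TopologicalSpace G] (z : G) : Set G :=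
  {x : G | Tendsto (fun n : ℕ => z ^ n * x * (z ^ n)⁻¹) atTop (nhds 1)}


section AuxCD
variable {G : Type*} [Group G]

/-- The word `(g^{w 0} z)(g^{w 1} z) ⋯ (g^{w (n-1)} z)`. -/
def cdWord (g z : G) : (n : ℕ) → (Fin n → Bool) → G
  | 0, _ => 1
  | n + 1, w => (cond (w 0) g 1) * z * cdWord g z n (Fin.tail w)

lemma cdWord_cons (g z : G) (n : ℕ) (b : Bool) (w : Fin n → Bool) :
    cdWord g z (n + 1) (Fin.cons b w) = (cond b g 1) * z * cdWord g z n w := by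
  simp [cdWord, Fin.tail_cons]

lemma cdWord_snoc (g z : G) : ∀ (n : ℕ) (w : Fin n → Bool) (b : Bool),
    cdWord g z (n + 1) (Fin.snoc w b) = cdWord g z n w * ((cond b g 1) * z)
  | 0, w, b => by
      have h0 : (Fin.snoc w b : Fin 1 → Bool) 0 = b := by
        have : (0 : Fin 1) = Fin.last 0 := rfl
        rw [this, Fin.snoc_last]
      simp [cdWord, h0]
  | n + 1, w, b => by
      have h1 : (Fin.snoc w b : Fin (n + 2) → Bool)
          = Fin.cons (w 0) (Fin.snoc (Fin.tail w) b) := by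
        rw [Fin.cons_snoc_eq_snoc_cons, Fin.cons_self_tail]
      rw [h1, cdWord_cons, cdWord_snoc g z n (Fin.tail w) b]
      have h2 : cdWord g z (n + 1) w = (cond (w 0) g 1) * z * cdWord g z n (Fin.tail w) := rfl
      rw [h2]
      group

/-- Bernoulli weight of a word. -/
def cdWt (aa bb : ℝ) {n : ℕ} (w : Fin n → Bool) : ℝ := ∏ i, (cond (w i) aa bb)

lemma cdWt_cons (aa bb : ℝ) {n : ℕ} (b : Bool) (w : Fin n → Bool) :
    cdWt aa bb (Fin.cons b w) = (cond b aa bb) * cdWt aa bb w := by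
  simp [cdWt, Fin.prod_univ_succ]

lemma cdWt_snoc (aa bb : ℝ) {n : ℕ} (w : Fin n → Bool) (b : Bool) :
    cdWt aa bb (Fin.snoc w b) = cdWt aa bb w * (cond b aa bb) := by
  simp [cdWt, Fin.prod_univ_castSucc]

/-- The `n`-step averaged function. -/
def cdIter (g z : G) (aa bb : ℝ) (f : G → ℝ) (n : ℕ) (x : G) : ℝ :=
  ∑ w : Fin n → Bool, cdWt aa bb w * f (x * cdWord g z n w)

lemma cdIter_zero (g z : G) (aa bb : ℝ) (f : G → ℝ) (x : G) :
    cdIter g z aa bb f 0 x = f x := by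
  simp [cdIter, cdWt, cdWord]

/-- Equivalence used to split off the last letter. -/
def cdSnocEquiv (n : ℕ) : ((Fin n → Bool) × Bool) ≃ (Fin (n + 1) → Bool) where
  toFun p := Fin.snoc p.1 p.2
  invFun w := (Fin.init w, w (Fin.last n))
  left_inv p := by simp [Fin.init_snoc, Fin.snoc_last]
  right_inv w := by simp [Fin.snoc_init_self]

lemma cdIter_succ (g z : G) (aa bb : ℝ) (f : G → ℝ) (n : ℕ) (x : G) :
    cdIter g z aa bb f (n + 1) x
      = aa * cdIter g z aa bb f n (x * (g * z)) + bb * cdIter g z aa bb f n (x * z) := by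
  rw [cdIter, ← Equiv.sum_comp (Fin.consEquiv (fun _ : Fin (n + 1) => Bool))
    (fun w => cdWt aa bb w * f (x * cdWord g z (n + 1) w)), Fintype.sum_prod_type,
    Fintype.sum_bool]
  rw [cdIter, cdIter, Finset.mul_sum, Finset.mul_sum]
  congr 1 <;> apply Finset.sum_congr rfl <;> intro w _ <;>
    simp [Fin.consEquiv, cdWord_cons, cdWt_cons, mul_assoc]

lemma cdIter_snoc (g z : G) (aa bb : ℝ) (f : G → ℝ) (n : ℕ) (x : G) :
    cdIter g z aa bb f (n + 1) x
      = ∑ w : Fin n → Bool, cdWt aa bb w *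
          (aa * f (x * cdWord g z n w * (g * z)) + bb * f (x * cdWord g z n w * z)) := by
  rw [cdIter, ← Equiv.sum_comp (cdSnocEquiv n)
    (fun w => cdWt aa bb w * f (x * cdWord g z (n + 1) w)), Fintype.sum_prod_type]
  apply Finset.sum_congr rfl
  intro w _
  rw [Fintype.sum_bool]
  simp only [cdSnocEquiv, Equiv.coe_fn_mk, cdWord_snoc, cdWt_snoc]
  simp only [cond_true, cond_false, one_mul]
  simp only [← mul_assoc]
  ring

lemma cdIter_const_one (g z : G) (aa bb : ℝ) (hab : aa + bb = 1) (n : ℕ) (x : G) :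
    cdIter g z aa bb (fun _ => (1 : ℝ)) n x = 1 := by
  induction n generalizing x with
  | zero => simp [cdIter_zero]
  | succ n ih => rw [cdIter_succ, ih, ih]; linarith

lemma cdIter_nonneg (g z : G) {aa bb : ℝ} (ha : 0 ≤ aa) (hb : 0 ≤ bb) {f : G → ℝ}
    (hf : ∀ y, 0 ≤ f y) (n : ℕ) (x : G) : 0 ≤ cdIter g z aa bb f n x := by
  induction n generalizing x with
  | zero => rw [cdIter_zero]; exact hf x
  | succ n ih =>
      rw [cdIter_succ]
      exact add_nonneg (mul_nonneg ha (ih _)) (mul_nonneg hb (ih _))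

lemma cdIter_le_one (g z : G) {aa bb : ℝ} (ha : 0 ≤ aa) (hb : 0 ≤ bb) (hab : aa + bb = 1)
    {f : G → ℝ} (hf : ∀ y, f y ≤ 1) (n : ℕ) (x : G) : cdIter g z aa bb f n x ≤ 1 := by
  induction n generalizing x with
  | zero => rw [cdIter_zero]; exact hf x
  | succ n ih =>
      rw [cdIter_succ]
      calc aa * cdIter g z aa bb f n (x * (g * z)) + bb * cdIter g z aa bb f n (x * z)
          ≤ aa * 1 + bb * 1 := by
            gcongr <;> [exact ih _; exact ih _]
        _ = 1 := by linarith

end AuxCD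

section VanDantzig
variable {G : Type*} [Group G] [TopologicalSpace G] [IsTopologicalGroup G]

/-- van Dantzig's theorem: in a totally disconnected locally compact group, every
neighbourhood of the identity contains a compact open subgroup. -/
theorem cd_exists_compactOpen_subgroup [LocallyCompactSpace G] [T2Space G]
    [TotallyDisconnectedSpace G] {O : Set G} (hO : O ∈ 𝓝 (1 : G)) :
    ∃ U : Subgroup G, IsOpen (U : Set G) ∧ IsCompact (U : Set G) ∧ (U : Set G) ⊆ O := by
  obtain ⟨s, hs_nhds, hs_sub, hs_comp⟩ := local_compact_nhds hO
  have hint : interior s ∈ 𝓝 (1 : G) := by rwa [interior_mem_nhds]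
  obtain ⟨K, hKclopen, hK1, hKsub⟩ :=
    (loc_compact_Haus_tot_disc_of_zero_dim (H := G)).mem_nhds_iff.mp hint
  have hKcomp : IsCompact K :=
    hs_comp.of_isClosed_subset hKclopen.1 (hKsub.trans interior_subset)
  obtain ⟨V₀, hV₀, hKV₀⟩ := compact_open_separated_mul_right hKcomp hKclopen.2 subset_rfl
  set V : Set G := V₀ ∩ V₀⁻¹ with hVdef
  have hVnhds : V ∈ 𝓝 (1 : G) := Filter.inter_mem hV₀ (inv_mem_nhds_one G hV₀)
  have hVV₀ : V ⊆ V₀ := Set.inter_subset_left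
  have hVsymm : ∀ v ∈ V, v⁻¹ ∈ V := by
    rintro v ⟨hv1, hv2⟩
    exact ⟨hv2, by simpa using hv1⟩
  have main : ∀ x ∈ Subgroup.closure V, (∀ k ∈ K, k * x ∈ K) ∧ (∀ k ∈ K, k * x⁻¹ ∈ K) := by
    intro x hx
    induction hx using Subgroup.closure_induction with
    | mem v hv =>
        constructor
        · intro k hk
          exact hKV₀ (Set.mul_mem_mul hk (hVV₀ hv))
        · intro k hk
          exact hKV₀ (Set.mul_mem_mul hk (hVV₀ (hVsymm v hv)))
    | one => simp
    | mul x y hx hy ihx ihy =>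
        constructor
        · intro k hk
          rw [← mul_assoc]
          exact ihy.1 _ (ihx.1 k hk)
        · intro k hk
          rw [mul_inv_rev, ← mul_assoc]
          exact ihx.2 _ (ihy.2 k hk)
    | inv x hx ihx => exact ⟨fun k hk => ihx.2 k hk, by simpa using fun k hk => ihx.1 k hk⟩
  have hsubK : (Subgroup.closure V : Set G) ⊆ K := by
    intro x hx
    have := (main x hx).1 1 hK1
    simpa using this
  have hopen : IsOpen (Subgroup.closure V : Set G) :=
    Subgroup.isOpen_of_mem_nhds _ (Filter.mem_of_superset hVnhds Subgroup.subset_closure)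
  refine ⟨Subgroup.closure V, hopen, ?_, ?_⟩
  · exact hKcomp.of_isClosed_subset (Subgroup.isClosed_of_isOpen _ hopen) hsubK
  · exact hsubK.trans ((hKsub.trans interior_subset).trans hs_sub)

end VanDantzig


/-- **Lemma 3.5.** Let `G` be a totally disconnected locally compact group and `z ∈ G` with
`C(z) ≠ {e}`. Let `g ∈ C(z)`, `g ≠ e`, and `ν = p·δ_g + (1-p)·δ_e` where `p ∈ (0,1)`,
`p ≠ 1/2`. Then `μ = ν * δ_z` is not a Choquet–Deny measure. -/

theorem lemma_3_5 {G : Type*} [Group G] [TopologicalSpace G] [IsTopologicalGroup G]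
    [TotallyDisconnectedSpace G] [LocallyCompactSpace G] [MeasurableSpace G] [BorelSpace G]
    (z g : G) (hg : g ∈ ContractionElt z) (hgne : g ≠ (1 : G))
    (p : ℝ≥0∞) (hp0 : 0 < p) (hp1 : p < 1) (hphalf : p ≠ 1 / 2) :
    ¬ IsChoquetDenyMeasure
        ((p • Measure.dirac g + (1 - p) • Measure.dirac (1 : G)).mconv (Measure.dirac z)) := by
  classical
  intro hCD
  have hgt : Tendsto (fun n : ℕ => z ^ n * g * (z ^ n)⁻¹) atTop (𝓝 (1 : G)) := hg
  -- ## Separation: `G` is Hausdorff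
  have hone_closed : IsClosed ({1} : Set G) := by
    have h1 : closure ({1} : Set G) ⊆ connectedComponent (1 : G) :=
      isPreconnected_singleton.closure.subset_connectedComponent
        (subset_closure (Set.mem_singleton _))
    have h2 : connectedComponent (1 : G) = {1} :=
      totallyDisconnectedSpace_iff_connectedComponent_singleton.mp ‹_› 1
    exact isClosed_of_closure_subset (h2 ▸ h1)
  haveI hT2 : T2Space G := IsTopologicalGroup.t2Space_iff_one_closed.mpr hone_closed
  haveI : MeasurableSingletonClass G := ⟨fun _ => isClosed_singleton.measurableSet⟩
  -- ## The weights
  have hpt : p ≠ ⊤ := hp1.ne_top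
  have hqt : (1 : ℝ≥0∞) - p ≠ ⊤ := (lt_of_le_of_lt tsub_le_self one_lt_top).ne
  set a : ℝ := p.toReal with ha_def
  set b : ℝ := ((1 : ℝ≥0∞) - p).toReal with hb_def
  have haq : 0 < a := ENNReal.toReal_pos hp0.ne' hpt
  have hbq : 0 < b := ENNReal.toReal_pos (tsub_pos_of_lt hp1).ne' hqt
  have hab : a + b = 1 := by
    rw [ha_def, hb_def, ← ENNReal.toReal_add hpt hqt, add_tsub_cancel_of_le hp1.le,
      ENNReal.toReal_one]
  -- ## The closed abelian subgroup generated by `z`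
  set H : Subgroup G := (Subgroup.zpowers z).topologicalClosure with hHdef
  have hzH : z ∈ H := Subgroup.le_topologicalClosure _ (Subgroup.mem_zpowers z)
  have hHclosed : IsClosed (H : Set G) := Subgroup.isClosed_topologicalClosure _
  have hgH : g ∉ H := by
    intro hgmem
    have hzcomm : z * g = g * z := by
      have hset : (H : Set G) ⊆ {x | z * x = x * z} := by
        rw [hHdef, Subgroup.topologicalClosure_coe]
        apply closure_minimal ?_ (isClosed_eq (continuous_mul_left z) (continuous_mul_right z))
        rintro _ ⟨n, rfl⟩
        exact ((Commute.refl z).zpow_right n).eq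
      exact hset hgmem
    have hconst : ∀ n : ℕ, z ^ n * g * (z ^ n)⁻¹ = g := by
      intro n
      have hc : Commute z g := hzcomm
      rw [(hc.pow_left n).eq]
      group
    have : Tendsto (fun _ : ℕ => g) atTop (𝓝 (1 : G)) := by
      simpa only [hconst] using hgt
    exact hgne (tendsto_nhds_unique tendsto_const_nhds this)
  -- ## A compact open subgroup `U` with `g ∉ U * H * U`
  obtain ⟨O₁, hO₁, O₂, hO₂, hO₁₂⟩ : ∃ O₁ ∈ 𝓝 (1 : G), ∃ O₂ ∈ 𝓝 (1 : G),
      ∀ u₁ ∈ O₁, ∀ u₂ ∈ O₂, u₁⁻¹ * g * u₂⁻¹ ∉ (H : Set G) := by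
    have hcont : Continuous (fun q : G × G => q.1⁻¹ * g * q.2⁻¹) :=
      (continuous_fst.inv.mul continuous_const).mul continuous_snd.inv
    have hmem : (fun q : G × G => q.1⁻¹ * g * q.2⁻¹) ⁻¹' ((H : Set G))ᶜ
        ∈ 𝓝 ((1 : G), (1 : G)) := by
      apply hcont.continuousAt.preimage_mem_nhds
      apply hHclosed.isOpen_compl.mem_nhds
      simpa using hgH
    rw [mem_nhds_prod_iff] at hmem
    obtain ⟨O₁, h1, O₂, h2, hsub⟩ := hmem
    exact ⟨O₁, h1, O₂, h2, fun u₁ hu₁ u₂ hu₂ => hsub (show (u₁, u₂) ∈ O₁ ×ˢ O₂ from ⟨hu₁, hu₂⟩)⟩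
  obtain ⟨U, hUopen, hUcomp, hUsub⟩ :=
    cd_exists_compactOpen_subgroup (Filter.inter_mem hO₁ hO₂)
  have hUHU : ∀ u₁ ∈ (U : Set G), ∀ k ∈ (H : Set G), ∀ u₂ ∈ (U : Set G),
      u₁ * k * u₂ ≠ g := by
    intro u₁ hu₁ k hk u₂ hu₂ heq
    have hkval : u₁⁻¹ * g * u₂⁻¹ = k := by rw [← heq]; group
    exact hO₁₂ u₁ (hUsub hu₁).1 u₂ (hUsub hu₂).2 (hkval ▸ hk)
  -- ## The clopen right-`H`-invariant set `A` and the indicator `f`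
  set A : Set G := (U : Set G) * (H : Set G) with hAdef
  have hAopen : IsOpen A := hUopen.mul_right
  have hmemH_iff : ∀ y k, k ∈ H → (y * k ∈ A ↔ y ∈ A) := by
    intro y k hk
    constructor
    · intro hmem
      obtain ⟨u, hu, h', hh', heq⟩ := Set.mem_mul.1 hmem
      refine Set.mem_mul.2 ⟨u, hu, h' * k⁻¹, mul_mem hh' (inv_mem hk), ?_⟩
      rw [← mul_assoc, heq]; group
    · intro hmem
      obtain ⟨u, hu, h', hh', heq⟩ := Set.mem_mul.1 hmem
      refine Set.mem_mul.2 ⟨u, hu, h' * k, mul_mem hh' hk, ?_⟩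
      rw [← mul_assoc, heq]
  set f : G → ℝ := Set.indicator A (fun _ => (1 : ℝ)) with hfdef
  have hfH : ∀ y k, k ∈ H → f (y * k) = f y := by
    intro y k hk
    by_cases hy : y ∈ A
    · rw [hfdef, Set.indicator_of_mem ((hmemH_iff y k hk).mpr hy), Set.indicator_of_mem hy]
    · rw [hfdef, Set.indicator_of_notMem (fun h => hy ((hmemH_iff y k hk).mp h)),
        Set.indicator_of_notMem hy]
  have hf0 : ∀ y, 0 ≤ f y := by
    intro y; rw [hfdef]; by_cases hy : y ∈ A <;> simp [hy]
  have hf1 : ∀ y, f y ≤ 1 := by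
    intro y; rw [hfdef]; by_cases hy : y ∈ A <;> simp [hy]
  have hUA : (U : Set G) ⊆ A := fun u hu =>
    Set.mem_mul.2 ⟨u, hu, 1, one_mem H, mul_one u⟩
  have hgUA : ∀ u ∈ (U : Set G), g * u ∉ A := by
    intro u hu hmem
    obtain ⟨u', hu', k, hk, heq⟩ := Set.mem_mul.1 hmem
    refine hUHU u' hu' k hk u⁻¹ (inv_mem hu) ?_
    rw [heq]; group
  have hAclosed : IsClosed A := by
    rw [← isOpen_compl_iff, isOpen_iff_mem_nhds]
    intro y hy
    have hK' : IsCompact ((U : Set G) * {y}) := hUcomp.mul isCompact_singleton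
    have hdisj : (U : Set G) * {y} ⊆ ((H : Set G))ᶜ := by
      intro t ht
      simp only [Set.mem_compl_iff]
      intro htH
      obtain ⟨u, hu, y', hy', htval⟩ := Set.mem_mul.1 ht
      apply hy
      refine Set.mem_mul.2 ⟨u⁻¹, inv_mem hu, t, htH, ?_⟩
      rw [← htval, Set.mem_singleton_iff.1 hy']
      group
    obtain ⟨W, hW, hKW⟩ := compact_open_separated_mul_right hK' hHclosed.isOpen_compl hdisj
    have h1 : Filter.map (fun w => y * w) (𝓝 (1 : G)) = 𝓝 y := by
      simpa using (Homeomorph.mulLeft y).map_nhds_eq (1 : G)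
    have h2 : (fun w => y * w) '' W ∈ Filter.map (fun w => y * w) (𝓝 (1 : G)) :=
      Filter.image_mem_map hW
    rw [h1] at h2
    refine Filter.mem_of_superset h2 ?_
    rintro _ ⟨w, hw, rfl⟩ hcontra
    change y * w ∈ A at hcontra
    obtain ⟨u, hu, k, hk, heq⟩ := Set.mem_mul.1 hcontra
    have hmemKW : u⁻¹ * y * w ∈ ((H : Set G))ᶜ := by
      refine hKW (Set.mem_mul.2 ⟨u⁻¹ * y, Set.mem_mul.2 ⟨u⁻¹, inv_mem hu, y, rfl, rfl⟩,
        w, hw, rfl⟩)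
    apply hmemKW
    have hterm : u⁻¹ * y * w = k := by rw [mul_assoc, ← heq]; group
    rw [hterm]; exact hk
  -- ## Eventual containment of conjugates in `U`
  have hUnhds : (U : Set G) ∈ 𝓝 (1 : G) := hUopen.mem_nhds (one_mem U)
  obtain ⟨M, hM⟩ : ∃ M : ℕ, ∀ n, M ≤ n → z ^ n * g * (z ^ n)⁻¹ ∈ (U : Set G) :=
    Filter.eventually_atTop.1 (hgt.eventually_mem hUnhds)
  -- ## The compact set `CC` containing all reduced words
  set Fc : Set G :=
    ⋃ j : Fin (M + 1), Set.range (fun w : Fin (j : ℕ) → Bool =>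
      cdWord g z (j : ℕ) w * (z ^ (j : ℕ))⁻¹) with hFc
  have hFcfin : Fc.Finite := Set.finite_iUnion fun j => Set.finite_range _
  set CC : Set G := Fc * (U : Set G) with hCC
  have hCCcomp : IsCompact CC := hFcfin.isCompact.mul hUcomp
  have hCCU : ∀ c ∈ CC, ∀ u ∈ (U : Set G), c * u ∈ CC := by
    intro c hc u hu
    obtain ⟨d, hd, v, hv, rfl⟩ := Set.mem_mul.1 hc
    exact Set.mem_mul.2 ⟨d, hd, v * u, mul_mem hv hu, (mul_assoc d v u).symm⟩
  have hFcCC : ∀ n (w : Fin n → Bool), n ≤ M →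
      cdWord g z n w * (z ^ n)⁻¹ ∈ CC := by
    intro n w hn
    refine Set.mem_mul.2 ⟨_, Set.mem_iUnion.2 ⟨⟨n, by omega⟩, ⟨w, rfl⟩⟩, 1, one_mem U, mul_one _⟩
  have hmemCC : ∀ n (w : Fin n → Bool), cdWord g z n w * (z ^ n)⁻¹ ∈ CC := by
    intro n
    induction n with
    | zero => exact fun w => hFcCC 0 w (Nat.zero_le M)
    | succ n ih =>
        intro w
        by_cases hn : n + 1 ≤ M
        · exact hFcCC (n + 1) w hn
        · have hnM : M ≤ n := by omega
          have hw : w = Fin.snoc (Fin.init w) (w (Fin.last n)) := (Fin.snoc_init_self w).symm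
          have key : cdWord g z (n + 1) w * (z ^ (n + 1))⁻¹
              = (cdWord g z n (Fin.init w) * (z ^ n)⁻¹)
                * (z ^ n * (cond (w (Fin.last n)) g 1) * (z ^ n)⁻¹) := by
            conv_lhs => rw [hw, cdWord_snoc]
            rw [pow_succ]
            group
          rw [key]
          refine hCCU _ (ih (Fin.init w)) _ ?_
          cases hb : w (Fin.last n)
          · simpa using one_mem U
          · exact hM n hnM
  -- ## Stabilization of the iterates
  have hstab : ∀ x : G, ∃ N, ∀ n, N ≤ n → cdIter g z a b f n x = cdIter g z a b f N x := by
    intro x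
    have hKcomp : IsCompact ((fun c => x * c) '' CC) := hCCcomp.image (continuous_mul_left x)
    obtain ⟨V₁, hV₁, hV₁sub⟩ := compact_open_separated_mul_right
      (hKcomp.inter_right hAclosed) hAopen Set.inter_subset_right
    obtain ⟨V₂, hV₂, hV₂sub⟩ := compact_open_separated_mul_right
      (hKcomp.inter_right hAopen.isClosed_compl) hAclosed.isOpen_compl Set.inter_subset_right
    have hiff : ∀ y ∈ (fun c => x * c) '' CC, ∀ v ∈ V₁ ∩ V₂, f (y * v) = f y := by
      intro y hy v hv
      by_cases hyA : y ∈ A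
      · rw [hfdef, Set.indicator_of_mem (hV₁sub (Set.mul_mem_mul ⟨hy, hyA⟩ hv.1)),
          Set.indicator_of_mem hyA]
      · rw [hfdef, Set.indicator_of_notMem (hV₂sub (Set.mul_mem_mul ⟨hy, hyA⟩ hv.2)),
          Set.indicator_of_notMem hyA]
    obtain ⟨N₀, hN₀⟩ : ∃ N₀ : ℕ, ∀ n, N₀ ≤ n → z ^ n * g * (z ^ n)⁻¹ ∈ V₁ ∩ V₂ :=
      Filter.eventually_atTop.1 (hgt.eventually_mem (Filter.inter_mem hV₁ hV₂))
    have hstep : ∀ n, N₀ ≤ n → cdIter g z a b f (n + 1) x = cdIter g z a b f n x := by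
      intro n hn
      rw [cdIter_snoc, cdIter]
      apply Finset.sum_congr rfl
      intro w _
      have hy : x * (cdWord g z n w * (z ^ n)⁻¹) ∈ (fun c => x * c) '' CC :=
        ⟨_, hmemCC n w, rfl⟩
      have e0 : f (x * cdWord g z n w) = f (x * (cdWord g z n w * (z ^ n)⁻¹)) := by
        conv_lhs => rw [show x * cdWord g z n w
          = x * (cdWord g z n w * (z ^ n)⁻¹) * z ^ n by group]
        exact hfH _ _ (pow_mem hzH n)
      have e1 : f (x * cdWord g z n w * z) = f (x * cdWord g z n w) := hfH _ _ hzH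
      have e2 : f (x * cdWord g z n w * (g * z)) = f (x * cdWord g z n w) := by
        have expand : x * cdWord g z n w * (g * z)
            = (x * (cdWord g z n w * (z ^ n)⁻¹)) * (z ^ n * g * (z ^ n)⁻¹) * (z ^ n * z) := by
          group
        rw [expand, hfH _ _ (mul_mem (pow_mem hzH n) hzH), hiff _ hy _ (hN₀ n hn), ← e0]
      rw [e1, e2]
      have : a * f (x * cdWord g z n w) + b * f (x * cdWord g z n w)
          = f (x * cdWord g z n w) := by rw [← add_mul, hab, one_mul]
      rw [this]
    refine ⟨N₀, ?_⟩
    intro n hn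
    induction n, hn using Nat.le_induction with
    | base => rfl
    | succ n hn ih => rw [hstep n hn, ih]
  choose Nf hNf using hstab
  set hfun : G → ℝ := fun x => cdIter g z a b f (Nf x) x with hfun_def
  have hval : ∀ x n, Nf x ≤ n → cdIter g z a b f n x = hfun x := fun x n hn => hNf x n hn
  -- ## Bounds
  have hfun0 : ∀ x, 0 ≤ hfun x := fun x => cdIter_nonneg g z haq.le hbq.le hf0 _ x
  have hfun1 : ∀ x, hfun x ≤ 1 := fun x => cdIter_le_one g z haq.le hbq.le hab hf1 _ x
  -- ## Harmonicity
  have hharm : ∀ x, hfun x = a * hfun (x * (g * z)) + b * hfun (x * z) := by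
    intro x
    set k := max (max (Nf (x * (g * z))) (Nf (x * z))) (Nf x) with hk
    have h1 : hfun x = cdIter g z a b f (k + 1) x :=
      (hval x (k + 1) (le_trans (le_max_right _ _) (Nat.le_succ k))).symm
    rw [h1, cdIter_succ,
      hval _ k (le_trans (le_max_left _ _) (le_max_left _ _)),
      hval _ k (le_trans (le_max_right _ _) (le_max_left _ _))]
  -- ## Continuity
  have hcont : Continuous hfun := by
    rw [continuous_iff_continuousAt]
    intro x
    have hKcomp : IsCompact ((fun c => x * c) '' CC) := hCCcomp.image (continuous_mul_left x)
    obtain ⟨W₁, hW₁, hW₁sub⟩ := compact_open_separated_mul_left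
      (hKcomp.inter_right hAclosed) hAopen Set.inter_subset_right
    obtain ⟨W₂, hW₂, hW₂sub⟩ := compact_open_separated_mul_left
      (hKcomp.inter_right hAopen.isClosed_compl) hAclosed.isOpen_compl Set.inter_subset_right
    have hiffL : ∀ d ∈ W₁ ∩ W₂, ∀ y ∈ (fun c => x * c) '' CC, f (d * y) = f y := by
      intro d hd y hy
      by_cases hyA : y ∈ A
      · rw [hfdef, Set.indicator_of_mem (hW₁sub (Set.mul_mem_mul hd.1 ⟨hy, hyA⟩)),
          Set.indicator_of_mem hyA]
      · rw [hfdef, Set.indicator_of_notMem (hW₂sub (Set.mul_mem_mul hd.2 ⟨hy, hyA⟩)),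
          Set.indicator_of_notMem hyA]
    obtain ⟨W₀, hW₀sub, hW₀open, hW₀mem⟩ := mem_nhds_iff.1 (Filter.inter_mem hW₁ hW₂)
    have hconst : ∀ x' ∈ W₀ * {x}, hfun x' = hfun x := by
      intro x' hx'
      obtain ⟨d, hd, x'', hx'', rfl⟩ := Set.mem_mul.1 hx'
      rw [show x'' = x from hx'']
      have hIter : ∀ n, cdIter g z a b f n (d * x) = cdIter g z a b f n x := by
        intro n
        rw [cdIter, cdIter]
        apply Finset.sum_congr rfl
        intro w _
        have hy : x * (cdWord g z n w * (z ^ n)⁻¹) ∈ (fun c => x * c) '' CC :=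
          ⟨_, hmemCC n w, rfl⟩
        have e0 : ∀ t : G, f (t * cdWord g z n w) = f (t * (cdWord g z n w * (z ^ n)⁻¹)) := by
          intro t
          conv_lhs => rw [show t * cdWord g z n w
            = t * (cdWord g z n w * (z ^ n)⁻¹) * z ^ n by group]
          exact hfH _ _ (pow_mem hzH n)
        rw [e0, e0]
        congr 1
        rw [show d * x * (cdWord g z n w * (z ^ n)⁻¹)
          = d * (x * (cdWord g z n w * (z ^ n)⁻¹)) by group]
        exact hiffL d (hW₀sub hd) _ hy
      rw [← hval (d * x) (max (Nf (d * x)) (Nf x)) (le_max_left _ _), hIter,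
        hval x _ (le_max_right _ _)]
    have hmemnhds : W₀ * {x} ∈ 𝓝 x :=
      (hW₀open.mul_right).mem_nhds (Set.mem_mul.2 ⟨1, hW₀mem, x, rfl, one_mul x⟩)
    exact ContinuousAt.congr continuousAt_const
      (Filter.eventuallyEq_of_mem hmemnhds hconst).symm
  -- ## Identification of the measure
  have hmeaspair : Measurable (fun x : G => (x, z)) := measurable_prodMk_right
  have hprod : (p • Measure.dirac g + (1 - p) • Measure.dirac (1 : G)).prod (Measure.dirac z)
      = p • Measure.dirac (g, z) + (1 - p) • Measure.dirac ((1 : G), z) := by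
    rw [Measure.prod_dirac, Measure.map_add _ _ hmeaspair, Measure.map_smul, Measure.map_smul,
      Measure.map_dirac' hmeaspair, Measure.map_dirac' hmeaspair]
  set f2 : G × G → G := fun q => if q.1 = g then g * z else z with hf2def
  have hf2meas : Measurable f2 := by
    apply Measurable.ite ?_ measurable_const measurable_const
    exact measurable_fst (measurableSet_singleton g)
  have hae : (fun q : G × G => q.1 * q.2)
      =ᵐ[(p • Measure.dirac g + (1 - p) • Measure.dirac (1 : G)).prod (Measure.dirac z)] f2 := by
    rw [Filter.EventuallyEq, ae_iff, hprod]
    have hptset : MeasurableSet ({(g, z)} ∪ {((1 : G), z)} : Set (G × G)) :=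
      (measurableSet_singleton _).union (measurableSet_singleton _)
    have hsub : {q : G × G | ¬ q.1 * q.2 = f2 q}
        ⊆ (({(g, z)} ∪ {((1 : G), z)} : Set (G × G)))ᶜ := by
      intro q hq
      simp only [Set.mem_compl_iff, Set.mem_union, Set.mem_singleton_iff]
      push_neg
      constructor <;> rintro rfl <;> apply hq
      · simp [hf2def]
      · simp [hf2def, Ne.symm hgne]
    apply measure_mono_null hsub
    rw [Measure.add_apply, Measure.smul_apply, Measure.smul_apply,
      Measure.dirac_apply' _ hptset.compl, Measure.dirac_apply' _ hptset.compl]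
    simp
  have hμeq : (p • Measure.dirac g + (1 - p) • Measure.dirac (1 : G)).mconv (Measure.dirac z)
      = p • Measure.dirac (g * z) + (1 - p) • Measure.dirac z := by
    rw [Measure.mconv, Measure.map_congr hae, hprod, Measure.map_add _ _ hf2meas,
      Measure.map_smul, Measure.map_smul, Measure.map_dirac' hf2meas, Measure.map_dirac' hf2meas]
    have e1 : f2 (g, z) = g * z := by simp [hf2def]
    have e2 : f2 ((1 : G), z) = z := by simp [hf2def, Ne.symm hgne]
    rw [e1, e2]
  rw [hμeq] at hCD
  -- ## The support elements
  have hmeasS : ∀ x ∈ ({g * z, z} : Set G),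
      x ∈ measSupport (p • Measure.dirac (g * z) + (1 - p) • Measure.dirac z : Measure G) := by
    intro x hx S hS
    have hxS : x ∈ S := mem_of_mem_nhds hS
    rcases hx with hx | hx
    · rw [hx] at hxS
      calc (0 : ℝ≥0∞) < p * 1 := by
            rw [mul_one]; exact hp0
        _ ≤ (p • Measure.dirac (g * z) + (1 - p) • Measure.dirac z : Measure G) S := by
            rw [Measure.add_apply, Measure.smul_apply, Measure.smul_apply, smul_eq_mul,
              smul_eq_mul, Measure.dirac_apply_of_mem hxS]
            exact le_add_right le_rfl
    · rw [Set.mem_singleton_iff] at hx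
      rw [hx] at hxS
      calc (0 : ℝ≥0∞) < (1 - p) * 1 := by
            rw [mul_one]; exact tsub_pos_of_lt hp1
        _ ≤ (p • Measure.dirac (g * z) + (1 - p) • Measure.dirac z : Measure G) S := by
            rw [Measure.add_apply, Measure.smul_apply, Measure.smul_apply, smul_eq_mul,
              smul_eq_mul, Measure.dirac_apply_of_mem hxS]
            exact le_add_left le_rfl
  have hz_mem : z ∈ adaptedSubgroup (p • Measure.dirac (g * z) + (1 - p) • Measure.dirac z) :=
    Subgroup.le_topologicalClosure _
      (Subgroup.subset_closure (hmeasS z (by simp)))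
  have hgz_mem : g * z
      ∈ adaptedSubgroup (p • Measure.dirac (g * z) + (1 - p) • Measure.dirac z) :=
    Subgroup.le_topologicalClosure _
      (Subgroup.subset_closure (hmeasS (g * z) (by simp)))
  have hg_mem : g ∈ adaptedSubgroup (p • Measure.dirac (g * z) + (1 - p) • Measure.dirac z) := by
    have := mul_mem hgz_mem (inv_mem hz_mem)
    simpa using this
  have hy_mem : (z ^ M)⁻¹ * g * z ^ M
      ∈ adaptedSubgroup (p • Measure.dirac (g * z) + (1 - p) • Measure.dirac z) :=
    mul_mem (mul_mem (inv_mem (pow_mem hz_mem M)) hg_mem) (pow_mem hz_mem M)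
  -- ## Values at `z ^ M` and `g * z ^ M`
  have hconj : ∀ n (w : Fin n → Bool),
      z ^ M * (cdWord g z n w * (z ^ n)⁻¹) * (z ^ M)⁻¹ ∈ (U : Set G) := by
    intro n
    induction n with
    | zero =>
        intro w
        have e : z ^ M * (cdWord g z 0 w * (z ^ 0)⁻¹) * (z ^ M)⁻¹ = 1 := by
          show z ^ M * ((1 : G) * (z ^ 0)⁻¹) * (z ^ M)⁻¹ = 1
          group
        rw [e]; exact one_mem U
    | succ n ih =>
        intro w
        have hw : w = Fin.snoc (Fin.init w) (w (Fin.last n)) := (Fin.snoc_init_self w).symm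
        have key : z ^ M * (cdWord g z (n + 1) w * (z ^ (n + 1))⁻¹) * (z ^ M)⁻¹
            = (z ^ M * (cdWord g z n (Fin.init w) * (z ^ n)⁻¹) * (z ^ M)⁻¹)
              * (z ^ (M + n) * (cond (w (Fin.last n)) g 1) * (z ^ (M + n))⁻¹) := by
          conv_lhs => rw [hw, cdWord_snoc]
          rw [pow_succ, pow_add]
          group
        rw [key]
        refine mul_mem (ih (Fin.init w)) ?_
        cases hb : w (Fin.last n)
        · simpa using one_mem U
        · exact hM (M + n) (Nat.le_add_right M n)
  have hone : ∀ n, cdIter g z a b f n (z ^ M) = 1 := by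
    intro n
    have heq : cdIter g z a b f n (z ^ M) = cdIter g z a b (fun _ => (1 : ℝ)) n (z ^ M) := by
      rw [cdIter, cdIter]
      apply Finset.sum_congr rfl
      intro w _
      congr 1
      have e : z ^ M * cdWord g z n w
          = (z ^ M * (cdWord g z n w * (z ^ n)⁻¹) * (z ^ M)⁻¹) * (z ^ M * z ^ n) := by group
      rw [e, hfH _ _ (mul_mem (pow_mem hzH M) (pow_mem hzH n))]
      exact Set.indicator_of_mem (hUA (hconj n w)) _
    rw [heq, cdIter_const_one g z a b hab]
  have hzero : ∀ n, cdIter g z a b f n (g * z ^ M) = 0 := by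
    intro n
    rw [cdIter]
    apply Finset.sum_eq_zero
    intro w _
    have e : g * z ^ M * cdWord g z n w
        = (g * (z ^ M * (cdWord g z n w * (z ^ n)⁻¹) * (z ^ M)⁻¹)) * (z ^ M * z ^ n) := by group
    rw [e, hfH _ _ (mul_mem (pow_mem hzH M) (pow_mem hzH n))]
    have hfz : f (g * (z ^ M * (cdWord g z n w * (z ^ n)⁻¹) * (z ^ M)⁻¹)) = 0 := by
      rw [hfdef]
      exact Set.indicator_of_notMem (hgUA _ (hconj n w)) _
    rw [hfz, mul_zero]
  have hfun_one : hfun (z ^ M) = 1 := by rw [hfun_def]; exact hone _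
  have hfun_zero : hfun (g * z ^ M) = 0 := by rw [hfun_def]; exact hzero _
  -- ## The complex witness
  set hC : G → ℂ := fun x => ((hfun x : ℝ) : ℂ) with hCdef
  have hCcont : Continuous hC := Complex.continuous_ofReal.comp hcont
  have hCnorm : ∀ x, ‖hC x‖ ≤ 1 := by
    intro x
    rw [hCdef]
    simp only [Complex.norm_real]
    exact abs_le.2 ⟨by linarith [hfun0 x], hfun1 x⟩
  haveI hfin1 : IsFiniteMeasure (p • Measure.dirac (g * z) : Measure G) := by
    refine ⟨?_⟩
    rw [Measure.smul_apply, smul_eq_mul, measure_univ, mul_one]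
    exact hpt.lt_top
  haveI hfin2 : IsFiniteMeasure ((1 - p) • Measure.dirac z : Measure G) := by
    refine ⟨?_⟩
    rw [Measure.smul_apply, smul_eq_mul, measure_univ, mul_one]
    exact hqt.lt_top
  have hCharm : ∀ x : G,
      hC x = ∫ y, hC (x * y) ∂(p • Measure.dirac (g * z) + (1 - p) • Measure.dirac z) := by
    intro x
    have hsm : StronglyMeasurable (fun y => hC (x * y)) :=
      (hCcont.comp (continuous_mul_left x)).stronglyMeasurable
    have hint : ∀ μ0 : Measure G, IsFiniteMeasure μ0 → Integrable (fun y => hC (x * y)) μ0 := by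
      intro μ0 hμ0
      refine Integrable.mono' (integrable_const 1) hsm.aestronglyMeasurable ?_
      filter_upwards with y
      exact hCnorm (x * y)
    rw [integral_add_measure (hint _ hfin1) (hint _ hfin2), integral_smul_measure,
      integral_smul_measure, integral_dirac' _ _ hsm, integral_dirac' _ _ hsm]
    show ((hfun x : ℝ) : ℂ)
        = a • ((hfun (x * (g * z)) : ℝ) : ℂ) + b • ((hfun (x * z) : ℝ) : ℂ)
    rw [hharm x, Complex.real_smul, Complex.real_smul]
    push_cast
    ring
  have hfinal := hCD hC hCcont ⟨1, hCnorm⟩ hCharm (z ^ M) ((z ^ M)⁻¹ * g * z ^ M) hy_mem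
  rw [show z ^ M * ((z ^ M)⁻¹ * g * z ^ M) = g * z ^ M by group] at hfinal
  rw [hCdef] at hfinal
  simp only [hfun_zero, hfun_one] at hfinal
  norm_num at hfinal
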